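/- Let S be a p×p symmetric matrix and let Θ̂ ∈ ℳ^{p×p} be positive definite and minimize f(Θ) := ⟨Θ, S⟩ − log det Θ over Θ ∈ ℳ^{p×p}. Then for every positive definite Θ* ∈ ℳ^{p×p} with Σ* := (Θ*)⁻¹, the basic inequality L(Θ̂, Θ*) ≤ (1/(2p))·⟨S − Σ*, Θ* − Θ̂⟩ holds. -/

import Mathlib

open MeasureTheory Matrix Real

namespace CovEst

/-- The convex cone of symmetric positive semidefinite matrices with
nonpositive off-diagonal entries (symmetric `M`-matrices). -/
def Mmat (m : Type*) [Fintype m] : Set (Matrix m m ℝ) :=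
  {A | A.PosSemidef ∧ ∀ i j, i ≠ j → A i j ≤ 0}

/-- Frobenius (trace) inner product `⟨A, B⟩ = tr (Aᵀ B)` on matrices. -/
noncomputable def mip {m : Type*} [Fintype m] (A B : Matrix m m ℝ) : ℝ :=
  (Aᵀ * B).trace

/-- The symmetrized Stein (divergence) loss
`L(Θ, Θ*) = (1/(2p)) ⟨Θ - Θ*, (Θ*)⁻¹ - Θ⁻¹⟩`. -/
noncomputable def stein {m : Type*} [Fintype m] [DecidableEq m] (T Ts : Matrix m m ℝ) : ℝ :=
  (2 * (Fintype.card m : ℝ))⁻¹ * mip (T - Ts) (Ts⁻¹ - T⁻¹)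

/-- Maximal correlation `max_{j ≠ k} Σ_{jk} / √(Σ_{jj} Σ_{kk})` of a covariance matrix. -/
noncomputable def maxCorr {m : Type*} (V : Matrix m m ℝ) : ℝ :=
  sSup {x | ∃ j k, j ≠ k ∧ x = V j k / Real.sqrt (V j j * V k k)}

/-- `γ(Σ) = (1 - max_{j ≠ k} Σ_{jk}/√(Σ_{jj}Σ_{kk}))⁻¹`. -/
noncomputable def gammaV {m : Type*} (V : Matrix m m ℝ) : ℝ := (1 - maxCorr V)⁻¹

/-- Largest off-diagonal entry. -/
noncomputable def maxOffDiag {m : Type*} (V : Matrix m m ℝ) : ℝ :=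
  sSup {x | ∃ j k, j ≠ k ∧ x = V j k}

/-- Entrywise sup-norm `‖A‖_∞ = max_{j,k} |A_{jk}|`. -/
noncomputable def norminf {m l : Type*} (A : Matrix m l ℝ) : ℝ :=
  sSup {x | ∃ i j, x = |A i j|}

/-- Sample covariance matrix `S = n⁻¹ Xᵀ X`. -/
noncomputable def sampleCov {n p : ℕ} (X : Fin n → Fin p → ℝ) : Matrix (Fin p) (Fin p) ℝ :=
  (n : ℝ)⁻¹ • ((Matrix.of X)ᵀ * Matrix.of X)

/-- The (negative log-likelihood) objective `⟨Θ, S⟩ - log det Θ`. -/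
noncomputable def objective {m : Type*} [Fintype m] [DecidableEq m] (S T : Matrix m m ℝ) : ℝ :=
  mip T S - Real.log T.det

/-- `T` is the sign-constrained Gaussian MLE for the sample covariance `S`:
it minimizes `⟨Θ, S⟩ - log det Θ` over positive definite `Θ ∈ ℳ`. -/
def IsSignMLE {m : Type*} [Fintype m] [DecidableEq m] (S T : Matrix m m ℝ) : Prop :=
  T ∈ Mmat m ∧ T.PosDef ∧ ∀ T' ∈ Mmat m, T'.PosDef → objective S T ≤ objective S T'

/-- Density of the `N(0, V)` distribution on `ℝᵖ` (with respect to Lebesgue measure). -/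
noncomputable def gaussPdf {p : ℕ} (V : Matrix (Fin p) (Fin p) ℝ) (x : Fin p → ℝ) : ENNReal :=
  ENNReal.ofReal ((((2 * Real.pi) ^ p * V.det) ^ (-(1 : ℝ) / 2)) *
    Real.exp (-(x ⬝ᵥ (V⁻¹ *ᵥ x)) / 2))

/-- The centered multivariate Gaussian measure `N(0, V)` on `ℝᵖ`. -/
noncomputable def gaussMeasure {p : ℕ} (V : Matrix (Fin p) (Fin p) ℝ) : Measure (Fin p → ℝ) :=
  volume.withDensity (gaussPdf V)

/-- Law of a data matrix `X ∈ ℝ^{n×p}` with i.i.d. rows `N(0, V)`. -/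
noncomputable def model (n : ℕ) {p : ℕ} (V : Matrix (Fin p) (Fin p) ℝ) :
    Measure (Fin n → Fin p → ℝ) :=
  Measure.pi fun _ : Fin n => gaussMeasure V

/-- The class `𝒟` of diagonal matrices with strictly positive diagonal. -/
def posDiag (p : ℕ) : Set (Matrix (Fin p) (Fin p) ℝ) :=
  {T | ∃ d : Fin p → ℝ, (∀ j, 0 < d j) ∧ T = Matrix.diagonal d}

/-- Largest (real) eigenvalue of a matrix. -/
noncomputable def lamMax {m : Type*} [Fintype m] (A : Matrix m m ℝ) : ℝ :=
  sSup {t | ∃ v : m → ℝ, v ≠ 0 ∧ A *ᵥ v = t • v}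

/-- Smallest (real) eigenvalue of a matrix. -/
noncomputable def lamMin {m : Type*} [Fintype m] (A : Matrix m m ℝ) : ℝ :=
  sInf {t | ∃ v : m → ℝ, v ≠ 0 ∧ A *ᵥ v = t • v}

/-- Spectral norm (largest singular value) of a matrix. -/
noncomputable def specNorm {m : Type*} [Fintype m] (A : Matrix m m ℝ) : ℝ :=
  sSup {t | ∃ v : m → ℝ, (∑ i, (v i) ^ 2) = 1 ∧ t = Real.sqrt (∑ i, ((A *ᵥ v) i) ^ 2)}

/-- Squared Frobenius norm. -/
noncomputable def frobSq {m l : Type*} [Fintype m] [Fintype l] (A : Matrix m l ℝ) : ℝ :=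
  ∑ i, ∑ j, (A i j) ^ 2


/-- Matrices inherit the product measurable structure. -/
instance matrixMeasurableSpace {m l : Type*} : MeasurableSpace (Matrix m l ℝ) :=
  MeasurableSpace.pi



open Polynomial Filter Set in
lemma aux_mip_comm {m : Type*} [Fintype m] (A B : Matrix m m ℝ) : mip A B = mip B A := by
  rw [mip, mip, ← Matrix.trace_transpose, Matrix.transpose_mul, Matrix.transpose_transpose]

lemma aux_posSemidef_smul {m : Type*} [Fintype m] {A : Matrix m m ℝ} (hA : A.PosSemidef)
    {c : ℝ} (hc : 0 ≤ c) : (c • A).PosSemidef := by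
  refine ⟨?_, fun x => ?_⟩
  · unfold Matrix.IsHermitian
    rw [Matrix.conjTranspose_smul, hA.1]; simp
  · simpa [Finsupp.mul_sum, mul_assoc, mul_left_comm] using smul_nonneg hc (hA.2 x)

lemma aux_posDef_smul {m : Type*} [Fintype m] {A : Matrix m m ℝ} (hA : A.PosDef)
    {c : ℝ} (hc : 0 < c) : (c • A).PosDef := by
  refine ⟨?_, fun x hx => ?_⟩
  · unfold Matrix.IsHermitian
    rw [Matrix.conjTranspose_smul, hA.1]; simp
  · simpa [Finsupp.mul_sum, mul_assoc, mul_left_comm] using smul_pos hc (hA.2 hx)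

open Filter Set in
lemma aux_deriv_nonneg_of_min {g : ℝ → ℝ} {a : ℝ} (hg : HasDerivAt g a 0)
    (h : ∀ t ∈ Set.Ioc (0:ℝ) 1, g 0 ≤ g t) : 0 ≤ a := by
  have h1 := hasDerivAt_iff_tendsto_slope.mp hg
  have h2 : Tendsto (slope g 0) (nhdsWithin 0 (Set.Ioi 0)) (nhds a) :=
    h1.mono_left (nhdsWithin_mono _ (fun x hx => ne_of_gt hx))
  refine ge_of_tendsto h2 ?_
  filter_upwards [Ioc_mem_nhdsGT_of_mem (by constructor <;> norm_num : (0:ℝ) ∈ Set.Ico 0 1)]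
    with t ht
  rw [slope_def_field]
  have ht0 : (0:ℝ) < t - 0 := by simpa using ht.1
  exact div_nonneg (sub_nonneg.2 (h t ht)) ht0.le

open Polynomial in
lemma aux_det_hasDerivAt {m : Type*} [Fintype m] [DecidableEq m] (M : Matrix m m ℝ) :
    HasDerivAt (fun t : ℝ => (1 + t • M).det) M.trace 0 := by
  have heq : (fun t : ℝ => (1 + t • M).det)
      = fun t : ℝ => 1 + M.trace * t
        + ((1 + (X : ℝ[X]) • M.map C).det).divX.divX.eval t * t ^ 2 := by
    funext t; exact Matrix.det_one_add_smul t M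
  rw [heq]
  have h1 : HasDerivAt (fun t : ℝ => 1 + M.trace * t) M.trace 0 := by
    simpa using ((hasDerivAt_id (0:ℝ)).const_mul M.trace).const_add 1
  have h2 : HasDerivAt
      (fun t : ℝ => ((1 + (X : ℝ[X]) • M.map C).det).divX.divX.eval t * t ^ 2) 0 0 := by
    have := (Polynomial.hasDerivAt ((1 + (X : ℝ[X]) • M.map C).det).divX.divX (0:ℝ)).mul
      (hasDerivAt_pow 2 (0:ℝ))
    exact this.congr_deriv (by simp)
  exact (h1.add h2).congr_deriv (by simp)

open Filter in
lemma aux_logdet_hasDerivAt {m : Type*} [Fintype m] [DecidableEq m]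
    {A : Matrix m m ℝ} (hA : A.PosDef) (D : Matrix m m ℝ) :
    HasDerivAt (fun t : ℝ => Real.log (A + t • D).det) (A⁻¹ * D).trace 0 := by
  set M := A⁻¹ * D with hM
  have hdet : A.det ≠ 0 := hA.det_pos.ne'
  have hfac : ∀ t : ℝ, A + t • D = A * (1 + t • M) := by
    intro t
    rw [Matrix.mul_add, mul_one, Matrix.mul_smul, hM,
      Matrix.mul_nonsing_inv_cancel_left _ _ (isUnit_iff_ne_zero.mpr hdet)]
  have hφ := aux_det_hasDerivAt M
  have hφ0 : (fun t : ℝ => (1 + t • M).det) 0 = 1 := by simp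
  have hev : ∀ᶠ t in nhds (0:ℝ), 0 < (1 + t • M).det := by
    have hc : ContinuousAt (fun t : ℝ => (1 + t • M).det) 0 := hφ.continuousAt
    have := hc (Ioi_mem_nhds
      (by rw [hφ0]; norm_num : (0:ℝ) < (fun t : ℝ => (1 + t • M).det) 0))
    exact this
  have hlog : HasDerivAt (fun t : ℝ => Real.log (1 + t • M).det) M.trace 0 := by
    have := hφ.log (by simp)
    simpa [hφ0] using this
  have hcongr : (fun t : ℝ => Real.log (A + t • D).det)
      =ᶠ[nhds (0:ℝ)] fun t => Real.log A.det + Real.log (1 + t • M).det := by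
    filter_upwards [hev] with t ht
    rw [hfac t, Matrix.det_mul, Real.log_mul hdet ht.ne']
  have := (hlog.const_add (Real.log A.det)).congr_of_eventuallyEq hcongr
  simpa using this

/-- The basic inequality: if `Θ̂ ∈ ℳ` is positive definite and minimizes
`⟨Θ, S⟩ - log det Θ` over positive definite members of `ℳ`, then for every
positive definite `Θ* ∈ ℳ`,
`L(Θ̂, Θ*) ≤ (1/(2p)) ⟨S - Σ*, Θ* - Θ̂⟩`. -/
theorem stmt_15 (p : ℕ) (S Θhat : Matrix (Fin p) (Fin p) ℝ) (hS : S.IsSymm)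
    (hmem : Θhat ∈ Mmat (Fin p)) (hpd : Θhat.PosDef)
    (hmin : ∀ Θ' ∈ Mmat (Fin p), Θ'.PosDef → objective S Θhat ≤ objective S Θ')
    (Θstar : Matrix (Fin p) (Fin p) ℝ)
    (hstar : Θstar ∈ Mmat (Fin p)) (hstarpd : Θstar.PosDef) :
    stein Θhat Θstar ≤ (2 * (p : ℝ))⁻¹ * mip (S - Θstar⁻¹) (Θstar - Θhat) := by
  set D := Θstar - Θhat with hD
  have hsym : Θhat⁻¹ᵀ = Θhat⁻¹ := by
    have h := hpd.1.inv.eq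
    rwa [Matrix.conjTranspose_eq_transpose_of_trivial] at h
  -- derivative of the objective along the segment towards Θstar
  have hg : HasDerivAt (fun t : ℝ => objective S (Θhat + t • D))
      (mip D S - (Θhat⁻¹ * D).trace) 0 := by
    have h1 : HasDerivAt (fun t : ℝ => mip (Θhat + t • D) S) (mip D S) 0 := by
      have heq : (fun t : ℝ => mip (Θhat + t • D) S) = fun t => mip Θhat S + t * mip D S := by
        funext t
        simp [mip, Matrix.transpose_add, Matrix.transpose_smul, Matrix.add_mul,
          Matrix.smul_mul, Matrix.trace_add, Matrix.trace_smul, smul_eq_mul]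
      rw [heq]
      simpa using ((hasDerivAt_id (0:ℝ)).mul_const (mip D S)).const_add (mip Θhat S)
    exact h1.sub (aux_logdet_hasDerivAt hpd D)
  -- first-order optimality
  have key : 0 ≤ mip D S - (Θhat⁻¹ * D).trace := by
    refine aux_deriv_nonneg_of_min hg ?_
    intro t ht
    have hconv : Θhat + t • D = (1 - t) • Θhat + t • Θstar := by
      rw [hD, smul_sub, sub_smul, one_smul]; abel
    have hpd' : (Θhat + t • D).PosDef := by
      rw [hconv]
      exact Matrix.PosDef.posSemidef_add
        (aux_posSemidef_smul hpd.posSemidef (by linarith [ht.2]))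
        (aux_posDef_smul hstarpd ht.1)
    have hmem' : Θhat + t • D ∈ Mmat (Fin p) := by
      refine ⟨hpd'.posSemidef, fun i j hij => ?_⟩
      rw [hconv]
      have h1 := hmem.2 i j hij
      have h2 := hstar.2 i j hij
      have ht1 : (0:ℝ) ≤ 1 - t := by linarith [ht.2]
      simp only [Matrix.add_apply, Matrix.smul_apply, smul_eq_mul]
      have := mul_nonpos_of_nonneg_of_nonpos ht1 h1
      have := mul_nonpos_of_nonneg_of_nonpos ht.1.le h2
      linarith
    simpa using hmin _ hmem' hpd'
  -- trace algebra
  have htr : (Dᵀ * Θhat⁻¹).trace = (Θhat⁻¹ * D).trace := by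
    have : mip D Θhat⁻¹ = mip Θhat⁻¹ D := aux_mip_comm D Θhat⁻¹
    rw [mip, mip, hsym] at this
    exact this
  have htr2 : mip D (S - Θhat⁻¹) = mip D S - (Θhat⁻¹ * D).trace := by
    rw [mip, mip, Matrix.mul_sub, Matrix.trace_sub, htr]
  have halg : mip (Θhat - Θstar) (Θstar⁻¹ - Θhat⁻¹) + mip D (S - Θhat⁻¹)
      = mip (Θstar - Θhat) (S - Θstar⁻¹) := by
    rw [hD]
    simp only [mip, Matrix.transpose_sub, Matrix.sub_mul, Matrix.mul_sub, Matrix.trace_sub]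
    ring
  rw [stein, aux_mip_comm (S - Θstar⁻¹)]
  have hnn : (0:ℝ) ≤ (2 * (Fintype.card (Fin p) : ℝ))⁻¹ := by positivity
  have hle : mip (Θhat - Θstar) (Θstar⁻¹ - Θhat⁻¹) ≤ mip (Θstar - Θhat) (S - Θstar⁻¹) := by
    linarith
  calc (2 * (Fintype.card (Fin p) : ℝ))⁻¹ * mip (Θhat - Θstar) (Θstar⁻¹ - Θhat⁻¹)
      ≤ (2 * (Fintype.card (Fin p) : ℝ))⁻¹ * mip (Θstar - Θhat) (S - Θstar⁻¹) :=
        mul_le_mul_of_nonneg_left hle hnn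
    _ = (2 * (p : ℝ))⁻¹ * mip (Θstar - Θhat) (S - Θstar⁻¹) := by
        rw [Fintype.card_fin]


end CovEst
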